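/- Linear algebra version of backward images: Let E₁, E₂ be finite-dimensional vector spaces with nondegenerate symmetric bilinear forms, A_i ⊆ E_i Lagrangian subspaces, and R ⊆ E₂ × E₁ a Lagrangian subspace (for the difference form) satisfying R(A₁) ⊆ A₂ and R⁻¹(0) ∩ A₁ = 0, where R(A₁) = {x₂ | ∃x₁ ∈ A₁, (x₂,x₁) ∈ R} and R⁻¹(S) = {x₁ | ∃x₂ ∈ S, (x₂,x₁) ∈ R}. If B₂ ⊆ E₂ is a Lagrangian subspace with E₂ = A₂ ⊕ B₂, then B₁ := R⁻¹(B₂) is a Lagrangian subspace of E₁ with E₁ = A₁ ⊕ B₁. -/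

import Mathlib

/-- A subspace is Lagrangian for a bilinear form if it coincides with its orthogonal. -/
def IsLagrangian {V : Type*} [AddCommGroup V] [Module ℝ V]
    (Φ : V →ₗ[ℝ] V →ₗ[ℝ] ℝ) (L : Submodule ℝ V) : Prop :=
  ∀ x, x ∈ L ↔ ∀ y ∈ L, Φ x y = 0

section Aux

set_option linter.unusedSectionVars false

variable {V : Type*} [AddCommGroup V] [Module ℝ V] [FiniteDimensional ℝ V]
  (B : V →ₗ[ℝ] V →ₗ[ℝ] ℝ)

lemma aux_isRefl (hs : ∀ x y, B x y = B y x) : B.IsRefl := fun x y h => by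
  rw [hs]; exact h

lemma aux_lag_eq_orthogonal (hs : ∀ x y, B x y = B y x) {L : Submodule ℝ V}
    (hL : IsLagrangian B L) : L = LinearMap.BilinForm.orthogonal B L := by
  ext x
  rw [hL x]
  simp only [LinearMap.BilinForm.mem_orthogonal_iff, LinearMap.BilinForm.IsOrtho]
  exact ⟨fun h y hy => by rw [hs]; exact h y hy,
         fun h y hy => by rw [← hs]; exact h y hy⟩

lemma aux_lag_two_finrank (hs : ∀ x y, B x y = B y x)
    (hnd : ∀ x, (∀ y, B x y = 0) → x = 0) {L : Submodule ℝ V}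
    (hL : IsLagrangian B L) :
    2 * Module.finrank ℝ L = Module.finrank ℝ V := by
  have h := LinearMap.BilinForm.finrank_orthogonal (B := B) ⟨hnd, fun y h => hnd y fun x => (hs y x).trans (h x)⟩ L
  rw [← aux_lag_eq_orthogonal B hs hL] at h
  have hle : Module.finrank ℝ L ≤ Module.finrank ℝ V := Submodule.finrank_le L
  omega

lemma aux_isotropic_le (hs : ∀ x y, B x y = B y x)
    (hnd : ∀ x, (∀ y, B x y = 0) → x = 0) {L : Submodule ℝ V}
    (hiso : ∀ x ∈ L, ∀ y ∈ L, B x y = 0) :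
    2 * Module.finrank ℝ L ≤ Module.finrank ℝ V := by
  have hle : L ≤ LinearMap.BilinForm.orthogonal B L := fun x hx n hn => hiso n hn x hx
  have h1 := Submodule.finrank_mono hle
  rw [LinearMap.BilinForm.finrank_orthogonal (B := B) ⟨hnd, fun y h => hnd y fun x => (hs y x).trans (h x)⟩ L] at h1
  have h2 : Module.finrank ℝ L ≤ Module.finrank ℝ V := Submodule.finrank_le L
  omega

lemma aux_isotropic_half_lagrangian (hs : ∀ x y, B x y = B y x)
    (hnd : ∀ x, (∀ y, B x y = 0) → x = 0) {L : Submodule ℝ V}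
    (hiso : ∀ x ∈ L, ∀ y ∈ L, B x y = 0)
    (hdim : 2 * Module.finrank ℝ L = Module.finrank ℝ V) :
    IsLagrangian B L := by
  have hle : L ≤ LinearMap.BilinForm.orthogonal B L := fun x hx n hn => hiso n hn x hx
  have heq : L = LinearMap.BilinForm.orthogonal B L := by
    refine Submodule.eq_of_le_of_finrank_le hle ?_
    rw [LinearMap.BilinForm.finrank_orthogonal (B := B) ⟨hnd, fun y h => hnd y fun x => (hs y x).trans (h x)⟩ L]
    omega
  intro x
  constructor
  · exact fun hx y hy => hiso x hx y hy
  · intro h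
    rw [heq]
    intro n hn
    show B n x = 0
    rw [hs]
    exact h n hn

end Aux

/-- Backward images of Lagrangian complements under a linear morphism of
Manin pairs: if `R ⊆ E₂ × E₁` is Lagrangian for the difference form, `R(A₁) ⊆ A₂`,
`R⁻¹(0) ∩ A₁ = 0`, and `B₂` is a Lagrangian complement to `A₂`, then `B₁ = R⁻¹(B₂)` is a
Lagrangian complement to `A₁`. -/
theorem backward_image_lagrangian_complement {E₁ E₂ : Type*}
    [AddCommGroup E₁] [Module ℝ E₁] [AddCommGroup E₂] [Module ℝ E₂]
    [FiniteDimensional ℝ E₁] [FiniteDimensional ℝ E₂]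
    (B₁ : E₁ →ₗ[ℝ] E₁ →ₗ[ℝ] ℝ) (B₂ : E₂ →ₗ[ℝ] E₂ →ₗ[ℝ] ℝ)
    (hsymm₁ : ∀ x y, B₁ x y = B₁ y x) (hsymm₂ : ∀ x y, B₂ x y = B₂ y x)
    (hnd₁ : ∀ x, (∀ y, B₁ x y = 0) → x = 0) (hnd₂ : ∀ x, (∀ y, B₂ x y = 0) → x = 0)
    (A₁ : Submodule ℝ E₁) (A₂ : Submodule ℝ E₂)
    (hA₁ : IsLagrangian B₁ A₁) (hA₂ : IsLagrangian B₂ A₂)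
    (R : Submodule ℝ (E₂ × E₁))
    (hR : IsLagrangian
      ((B₂.compl₁₂ (LinearMap.fst ℝ E₂ E₁) (LinearMap.fst ℝ E₂ E₁)) -
        (B₁.compl₁₂ (LinearMap.snd ℝ E₂ E₁) (LinearMap.snd ℝ E₂ E₁))) R)
    (hRA : ∀ x₂ x₁, (x₂, x₁) ∈ R → x₁ ∈ A₁ → x₂ ∈ A₂)
    (hker : ∀ x₁ ∈ A₁, ((0 : E₂), x₁) ∈ R → x₁ = 0)
    (Bsub : Submodule ℝ E₂) (hBsub : IsLagrangian B₂ Bsub)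
    (hcompl : IsCompl A₂ Bsub) :
    IsLagrangian B₁
        (Submodule.map (LinearMap.snd ℝ E₂ E₁)
          (R ⊓ Submodule.comap (LinearMap.fst ℝ E₂ E₁) Bsub)) ∧
      IsCompl A₁
        (Submodule.map (LinearMap.snd ℝ E₂ E₁)
          (R ⊓ Submodule.comap (LinearMap.fst ℝ E₂ E₁) Bsub)) := by
  classical
  set Φ : (E₂ × E₁) →ₗ[ℝ] (E₂ × E₁) →ₗ[ℝ] ℝ :=
    (B₂.compl₁₂ (LinearMap.fst ℝ E₂ E₁) (LinearMap.fst ℝ E₂ E₁)) -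
      (B₁.compl₁₂ (LinearMap.snd ℝ E₂ E₁) (LinearMap.snd ℝ E₂ E₁)) with hΦdef
  have hΦapp : ∀ z w : E₂ × E₁, Φ z w = B₂ z.1 w.1 - B₁ z.2 w.2 := by
    intro z w
    simp [hΦdef, LinearMap.compl₁₂_apply]
  have hΦsymm : ∀ z w : E₂ × E₁, Φ z w = Φ w z := by
    intro z w
    rw [hΦapp, hΦapp, hsymm₂, hsymm₁]
  have hΦnd : ∀ z : E₂ × E₁, (∀ w, Φ z w = 0) → z = 0 := by
    intro z h
    have h1 : z.1 = 0 := by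
      apply hnd₂
      intro y
      have := h (y, 0)
      rw [hΦapp] at this
      simpa using this
    have h2 : z.2 = 0 := by
      apply hnd₁
      intro y
      have := h (0, y)
      rw [hΦapp] at this
      simp only [map_zero, LinearMap.zero_apply, zero_sub, neg_eq_zero] at this
      exact this
    exact Prod.ext h1 h2
  set C : Submodule ℝ (E₂ × E₁) := Submodule.comap (LinearMap.fst ℝ E₂ E₁) Bsub with hCdef
  set W : Submodule ℝ (E₂ × E₁) := R ⊓ C with hWdef
  set L : Submodule ℝ E₁ := Submodule.map (LinearMap.snd ℝ E₂ E₁) W with hLdef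
  -- membership characterization of L
  have hmemL : ∀ x : E₁, x ∈ L ↔ ∃ x₂ : E₂, (x₂, x) ∈ R ∧ x₂ ∈ Bsub := by
    intro x
    constructor
    · rintro ⟨⟨p₂, p₁⟩, ⟨hpR, hpC⟩, hp⟩
      simp only [LinearMap.snd_apply] at hp
      subst hp
      exact ⟨p₂, hpR, hpC⟩
    · rintro ⟨x₂, hxR, hxB⟩
      exact ⟨(x₂, x), ⟨hxR, hxB⟩, rfl⟩
  -- dimension facts
  have hdimProd : Module.finrank ℝ (E₂ × E₁) = Module.finrank ℝ E₂ + Module.finrank ℝ E₁ :=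
    Module.finrank_prod
  have hdimA₁ : 2 * Module.finrank ℝ A₁ = Module.finrank ℝ E₁ :=
    aux_lag_two_finrank B₁ hsymm₁ hnd₁ hA₁
  have hdimBsub : 2 * Module.finrank ℝ Bsub = Module.finrank ℝ E₂ :=
    aux_lag_two_finrank B₂ hsymm₂ hnd₂ hBsub
  have hdimR : 2 * Module.finrank ℝ R = Module.finrank ℝ (E₂ × E₁) :=
    aux_lag_two_finrank Φ hΦsymm hΦnd hR
  -- finrank of C
  have eC : (↥Bsub × E₁) ≃ₗ[ℝ] ↥C :=
    { toFun := fun p => ⟨(p.1.1, p.2), p.1.2⟩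
      map_add' := fun p q => rfl
      map_smul' := fun c p => rfl
      invFun := fun q => (⟨q.1.1, q.2⟩, q.1.2)
      left_inv := fun p => rfl
      right_inv := fun q => rfl }
  have hdimC : Module.finrank ℝ C = Module.finrank ℝ Bsub + Module.finrank ℝ E₁ := by
    rw [← eC.finrank_eq, Module.finrank_prod]
  -- lower bound on finrank W
  have hsup : Module.finrank ℝ ↥(R ⊔ C) ≤ Module.finrank ℝ (E₂ × E₁) :=
    Submodule.finrank_le _
  have hsupinf := Submodule.finrank_sup_add_finrank_inf_eq R C
  rw [← hWdef] at hsupinf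
  -- finrank L = finrank W via injectivity of snd on W
  have hdisj₂ : ∀ x ∈ A₂, x ∈ Bsub → x = 0 := by
    have := hcompl.disjoint
    rw [Submodule.disjoint_def] at this
    exact this
  have hdimLW : Module.finrank ℝ L = Module.finrank ℝ W := by
    set g : ↥W →ₗ[ℝ] E₁ := (LinearMap.snd ℝ E₂ E₁).comp W.subtype with hgdef
    have hrange : LinearMap.range g = L := by
      rw [hgdef, LinearMap.range_comp, Submodule.range_subtype]
    have hkerg : LinearMap.ker g = ⊥ := by
      rw [LinearMap.ker_eq_bot']
      rintro ⟨⟨p₂, p₁⟩, hpR, hpC⟩ hp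
      have hp1 : p₁ = 0 := hp
      subst hp1
      have hp2 : p₂ ∈ A₂ := hRA p₂ 0 hpR (zero_mem A₁)
      have : p₂ = 0 := hdisj₂ p₂ hp2 hpC
      subst this
      rfl
    have := LinearMap.finrank_range_add_finrank_ker g
    rw [hrange, hkerg, finrank_bot, add_zero] at this
    exact this
  have hdimLlb : Module.finrank ℝ E₁ ≤ 2 * Module.finrank ℝ L := by
    rw [hdimLW]
    omega
  -- isotropy of L
  have hiso : ∀ x ∈ L, ∀ y ∈ L, B₁ x y = 0 := by
    intro x hx y hy
    obtain ⟨x₂, hxR, hxB⟩ := (hmemL x).1 hx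
    obtain ⟨y₂, hyR, hyB⟩ := (hmemL y).1 hy
    have h1 : Φ (x₂, x) (y₂, y) = 0 := (hR (x₂, x)).1 hxR (y₂, y) hyR
    rw [hΦapp] at h1
    have h2 : B₂ x₂ y₂ = 0 := (hBsub x₂).1 hxB y₂ hyB
    simp only [h2, zero_sub, neg_eq_zero] at h1
    exact h1
  have hdimLub : 2 * Module.finrank ℝ L ≤ Module.finrank ℝ E₁ :=
    aux_isotropic_le B₁ hsymm₁ hnd₁ hiso
  have hdimL : 2 * Module.finrank ℝ L = Module.finrank ℝ E₁ := le_antisymm hdimLub hdimLlb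
  -- Lagrangian
  have hLag : IsLagrangian B₁ L := aux_isotropic_half_lagrangian B₁ hsymm₁ hnd₁ hiso hdimL
  -- disjointness
  have hdisj : Disjoint A₁ L := by
    rw [Submodule.disjoint_def]
    intro x hxA hxL
    obtain ⟨x₂, hxR, hxB⟩ := (hmemL x).1 hxL
    have hx2A : x₂ ∈ A₂ := hRA x₂ x hxR hxA
    have hx20 : x₂ = 0 := hdisj₂ x₂ hx2A hxB
    subst hx20
    exact hker x hxA hxR
  have hcod : A₁ ⊔ L = ⊤ := by
    apply Submodule.eq_top_of_disjoint A₁ L _ hdisj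
    omega
  exact ⟨hLag, ⟨hdisj, codisjoint_iff.mpr hcod⟩⟩
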